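/- Let M(x) be a univariate parametric Markov chain on states S with polynomial transition probabilities of degree at most d, and let the set of admissible valuations X be nonempty. For a target set T, the reachability probability Pr^{M(x)}_s(◇T), as a function X → [0,1], coincides on X with a rational function f_s(x)/g_s(x) where f_s, g_s ∈ ℚ[x] have degree at most n·d, with n = |S|, and g_s(ξ) ≠ 0 for all ξ ∈ X. -/

import Mathlib

open scoped Classical
open Polynomial
open scoped Matrix

/-- Probability of reaching `T` within `n` steps, starting from `s`. -/
noncomputable def reachN {S : Type*} [Fintype S] (P : S → S → ℝ) (T : Set S) :
    ℕ → S → ℝ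
  | 0, s => if s ∈ T then 1 else 0
  | n + 1, s => if s ∈ T then 1 else ∑ t, P s t * reachN P T n t

/-- Probability of eventually reaching `T` from `s`. -/
noncomputable def reachProb {S : Type*} [Fintype S] (P : S → S → ℝ) (T : Set S) (s : S) :
    ℝ :=
  ⨆ n, reachN P T n s

section aux

variable {S : Type*} [Fintype S] {P : S → S → ℝ} {T : Set S}

lemma reachN_nonneg (hP0 : ∀ a b, 0 ≤ P a b) : ∀ m s, 0 ≤ reachN P T m s := by
  intro m
  induction m with
  | zero => intro s; simp only [reachN]; split <;> norm_num
  | succ k ih =>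
    intro s; simp only [reachN]; split
    · norm_num
    · exact Finset.sum_nonneg fun t _ => mul_nonneg (hP0 _ _) (ih t)

lemma reachN_le_one (hP0 : ∀ a b, 0 ≤ P a b) (hP1 : ∀ a, ∑ b, P a b = 1) :
    ∀ m s, reachN P T m s ≤ 1 := by
  intro m
  induction m with
  | zero => intro s; simp only [reachN]; split <;> norm_num
  | succ k ih =>
    intro s; simp only [reachN]; split
    · exact le_refl 1
    · calc ∑ t, P s t * reachN P T k t ≤ ∑ t, P s t :=
            Finset.sum_le_sum fun t _ => mul_le_of_le_one_right (hP0 _ _) (ih t)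
        _ = 1 := hP1 s

lemma reachN_mono (hP0 : ∀ a b, 0 ≤ P a b) (s : S) :
    Monotone fun m => reachN P T m s := by
  have key : ∀ m s, reachN P T m s ≤ reachN P T (m+1) s := by
    intro m
    induction m with
    | zero =>
      intro s; simp only [reachN]; split
      · exact le_refl 1
      · exact Finset.sum_nonneg fun t _ => mul_nonneg (hP0 _ _)
          (reachN_nonneg hP0 0 t)
    | succ k ih =>
      intro s; simp only [reachN]; split
      · exact le_refl 1
      · exact Finset.sum_le_sum fun t _ =>
          mul_le_mul_of_nonneg_left (ih t) (hP0 _ _)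
  exact monotone_nat_of_le_succ fun m => key m s

lemma tendsto_reachN (hP0 : ∀ a b, 0 ≤ P a b) (hP1 : ∀ a, ∑ b, P a b = 1) (s : S) :
    Filter.Tendsto (fun m => reachN P T m s) Filter.atTop (nhds (reachProb P T s)) :=
  tendsto_atTop_ciSup (reachN_mono hP0 s)
    ⟨1, by rintro x ⟨m, rfl⟩; exact reachN_le_one hP0 hP1 m s⟩

lemma reachProb_fixed (hP0 : ∀ a b, 0 ≤ P a b) (hP1 : ∀ a, ∑ b, P a b = 1) (s : S) :
    reachProb P T s = if s ∈ T then 1 else ∑ t, P s t * reachProb P T t := by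
  have h1 : Filter.Tendsto (fun m => reachN P T (m+1) s) Filter.atTop
      (nhds (reachProb P T s)) :=
    (tendsto_reachN hP0 hP1 s).comp (Filter.tendsto_add_atTop_nat 1)
  have h2 : Filter.Tendsto (fun m => reachN P T (m+1) s) Filter.atTop
      (nhds (if s ∈ T then 1 else ∑ t, P s t * reachProb P T t)) := by
    simp only [reachN]; split
    · exact tendsto_const_nhds
    · exact tendsto_finset_sum _ fun t _ =>
        tendsto_const_nhds.mul (tendsto_reachN hP0 hP1 t)
  exact tendsto_nhds_unique h1 h2

lemma reachProb_of_mem (hs : s ∈ T) : reachProb P T s = 1 := by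
  have : ∀ m, reachN P T m s = 1 := by intro m; cases m <;> simp [reachN, hs]
  simp [reachProb, this]

lemma reachProb_of_not_reach
    (hs : ∀ t ∈ T, ¬ Relation.ReflTransGen (fun a b => P a b ≠ 0) s t) :
    reachProb P T s = 0 := by
  have key : ∀ m s, (∀ t ∈ T, ¬ Relation.ReflTransGen (fun a b => P a b ≠ 0) s t) →
      reachN P T m s = 0 := by
    intro m
    induction m with
    | zero =>
      intro s hs
      have : s ∉ T := fun h => hs s h Relation.ReflTransGen.refl
      simp [reachN, this]
    | succ k ih =>
      intro s hs
      have hsT : s ∉ T := fun h => hs s h Relation.ReflTransGen.refl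
      simp only [reachN, if_neg hsT]
      refine Finset.sum_eq_zero fun t _ => ?_
      by_cases hPt : P s t = 0
      · rw [hPt, zero_mul]
      · rw [ih t fun t' ht' hrel => hs t' ht' (hrel.head hPt), mul_zero]
  have : ∀ m, reachN P T m s = 0 := fun m => key m s hs
  simp [reachProb, this]

lemma natDegree_det_le {ι : Type*} [Fintype ι] [DecidableEq ι]
    (M : Matrix ι ι (Polynomial ℚ)) (d : ℕ) (h : ∀ i j, (M i j).natDegree ≤ d) :
    M.det.natDegree ≤ Fintype.card ι * d := by
  rw [Matrix.det_apply]
  refine natDegree_sum_le_of_forall_le _ _ fun σ _ => ?_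
  have hsm : (Equiv.Perm.sign σ • ∏ i, M (σ i) i).natDegree
      = (∏ i, M (σ i) i).natDegree := by
    rcases Int.units_eq_one_or (Equiv.Perm.sign σ) with hσ | hσ <;>
      simp [hσ, natDegree_neg]
  rw [hsm]
  calc (∏ i, M (σ i) i).natDegree ≤ ∑ i, (M (σ i) i).natDegree := natDegree_prod_le _ _
    _ ≤ ∑ _i : ι, d := Finset.sum_le_sum fun i _ => h _ _
    _ = Fintype.card ι * d := by simp [Finset.sum_const, mul_comm]

end aux

/-- Let `M(x)` be a univariate parametric Markov chain on `n` states
with polynomial transition probabilities of degree at most `d`, with a nonempty set `X`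
of admissible valuations. Then for every state `s` and target set `T`, the reachability
probability `Pr^{M(ξ)}_s(◇T)` coincides on `X` with a rational function `f_s(ξ)/g_s(ξ)`
where `f_s, g_s ∈ ℚ[x]` have degree at most `n·d` and `g_s` does not vanish on `X`. -/
theorem univariate_reach_rational_function (n d : ℕ)
    (P : Fin n → Fin n → Polynomial ℚ)
    (hd : ∀ s t, (P s t).natDegree ≤ d)
    (X : Set ℝ) (hX : X.Nonempty)
    (hadm : ∀ ξ ∈ X,
      (∀ s t, (0 < aeval ξ (P s t) ↔ P s t ≠ 0) ∧ 0 ≤ aeval ξ (P s t)) ∧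
      (∀ s, ∑ t, aeval ξ (P s t) = 1)) :
    ∀ (s : Fin n) (T : Set (Fin n)), ∃ f g : Polynomial ℚ,
      f.natDegree ≤ n * d ∧ g.natDegree ≤ n * d ∧
      ∀ ξ ∈ X, aeval ξ g ≠ 0 ∧
        reachProb (fun a b => aeval ξ (P a b)) T s = aeval ξ f / aeval ξ g := by
  intro s T
  set step : Fin n → Fin n → Prop := fun a b => P a b ≠ 0 with hstep
  set CanReach : Fin n → Prop := fun u => ∃ t ∈ T, Relation.ReflTransGen step u t with hCR
  have hfacts : ∀ ξ ∈ X, (∀ a b, 0 ≤ aeval ξ (P a b)) ∧ (∀ a, ∑ b, aeval ξ (P a b) = 1)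
      ∧ (∀ a b, aeval ξ (P a b) ≠ 0 ↔ P a b ≠ 0) := by
    intro ξ hξ
    obtain ⟨h1, h2⟩ := hadm ξ hξ
    refine ⟨fun a b => (h1 a b).2, h2, fun a b => ?_⟩
    constructor
    · intro hne; exact (h1 a b).1.mp (lt_of_le_of_ne (h1 a b).2 (Ne.symm hne))
    · intro hne; exact ne_of_gt ((h1 a b).1.mpr hne)
  -- vanishing off the reachable set
  have hzero : ∀ ξ ∈ X, ∀ w : Fin n, ¬ CanReach w →
      reachProb (fun a b => aeval ξ (P a b)) T w = 0 := by
    intro ξ hξ w hw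
    refine reachProb_of_not_reach fun t ht hrel => hw ⟨t, ht, Relation.ReflTransGen.mono (p := step) (fun a b (hab : aeval ξ (P a b) ≠ 0) => ?_) w t hrel⟩
    exact ((hfacts ξ hξ).2.2 a b).mp hab
  by_cases hsT : s ∈ T
  · refine ⟨1, 1, by simp, by simp, fun ξ hξ => ?_⟩
    refine ⟨by simp, ?_⟩
    rw [reachProb_of_mem hsT]; simp
  by_cases hcan : CanReach s
  swap
  · refine ⟨0, 1, by simp, by simp, fun ξ hξ => ?_⟩
    refine ⟨by simp, ?_⟩
    rw [hzero ξ hξ s hcan]; simp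
  -- main case
  obtain ⟨t₀, ht₀T, -⟩ := id hcan
  have hVs : CanReach s ∧ s ∉ T := ⟨hcan, hsT⟩
  set A : Matrix {u : Fin n // CanReach u ∧ u ∉ T} {u : Fin n // CanReach u ∧ u ∉ T}
      (Polynomial ℚ) := Matrix.of fun u v => P u.1 v.1 with hA
  set Mm : Matrix {u : Fin n // CanReach u ∧ u ∉ T} {u : Fin n // CanReach u ∧ u ∉ T}
      (Polynomial ℚ) := 1 - A with hMm
  set b : {u : Fin n // CanReach u ∧ u ∉ T} → Polynomial ℚ :=
    fun u => ∑ t ∈ Finset.univ.filter (fun t => t ∈ T), P u.1 t with hb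
  set sV : {u : Fin n // CanReach u ∧ u ∉ T} := ⟨s, hVs⟩ with hsV
  have hMd : ∀ u v, (Mm u v).natDegree ≤ d := by
    intro u v
    have h1 : Mm u v = (if u = v then 1 else 0) - P u.1 v.1 := by
      simp [hMm, hA, Matrix.one_apply, Matrix.sub_apply]
    rw [h1]
    refine (natDegree_sub_le _ _).trans (max_le ?_ (hd _ _))
    split <;> simp
  have hcard : Fintype.card {u : Fin n // CanReach u ∧ u ∉ T} ≤ n := by
    simpa using Fintype.card_subtype_le (fun u : Fin n => CanReach u ∧ u ∉ T)
  have hcardlt : Fintype.card {u : Fin n // CanReach u ∧ u ∉ T} < n := by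
    have := Fintype.card_subtype_lt (p := fun u : Fin n => CanReach u ∧ u ∉ T)
      (x := t₀) (by simp [ht₀T])
    simpa using this
  have hadjd : ∀ u v, (Mm.adjugate u v).natDegree ≤
      Fintype.card {u : Fin n // CanReach u ∧ u ∉ T} * d := by
    intro u v
    rw [Matrix.adjugate_apply]
    refine natDegree_det_le _ d fun i j => ?_
    rw [Matrix.updateRow_apply]
    split
    · rw [Pi.single_apply]; split <;> simp
    · exact hMd _ _
  have hbd : ∀ u, (b u).natDegree ≤ d := fun u =>
    natDegree_sum_le_of_forall_le _ _ fun t _ => hd _ _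
  refine ⟨(Mm.adjugate *ᵥ b) sV, Mm.det, ?_, ?_, ?_⟩
  · -- degree bound for f
    have : (Mm.adjugate *ᵥ b) sV = ∑ v, Mm.adjugate sV v * b v := rfl
    rw [this]
    refine natDegree_sum_le_of_forall_le _ _ fun v _ => ?_
    refine (natDegree_mul_le).trans ?_
    calc (Mm.adjugate sV v).natDegree + (b v).natDegree
        ≤ Fintype.card {u : Fin n // CanReach u ∧ u ∉ T} * d + d :=
          add_le_add (hadjd _ _) (hbd _)
      _ = (Fintype.card {u : Fin n // CanReach u ∧ u ∉ T} + 1) * d := by ring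
      _ ≤ n * d := Nat.mul_le_mul_right d hcardlt
  · -- degree bound for g
    exact (natDegree_det_le _ d hMd).trans (Nat.mul_le_mul_right d hcard)
  intro ξ hξ
  obtain ⟨hP0, hP1, hPne⟩ := hfacts ξ hξ
  set Pξ : Fin n → Fin n → ℝ := fun a b => aeval ξ (P a b) with hPξ
  set Mξ : Matrix {u : Fin n // CanReach u ∧ u ∉ T} {u : Fin n // CanReach u ∧ u ∉ T} ℝ :=
    Mm.map (aeval ξ) with hMξdef
  set p : {u : Fin n // CanReach u ∧ u ∉ T} → ℝ := fun u => reachProb Pξ T u.1 with hp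
  set bξ : {u : Fin n // CanReach u ∧ u ∉ T} → ℝ := fun u => aeval ξ (b u) with hbξ
  have hMξ : Mξ = 1 - (A.map (aeval ξ)) := by
    ext i j
    simp [hMξdef, hMm, Matrix.map_apply, Matrix.one_apply, Matrix.sub_apply,
      apply_ite (aeval ξ)]
  have hAmul : ∀ v : {u : Fin n // CanReach u ∧ u ∉ T} → ℝ, ∀ u,
      ((A.map (aeval ξ)) *ᵥ v) u = ∑ w, Pξ u.1 w.1 * v w := by
    intro v u
    simp [Matrix.mulVec, dotProduct, Matrix.map_apply, hA, hPξ]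
  have hbξval : ∀ u, bξ u = ∑ t ∈ Finset.univ.filter (fun t => t ∈ T), Pξ u.1 t := by
    intro u; rw [hbξ, hb]; simp [map_sum, hPξ]
  -- the linear system
  have hfix : ∀ u, p u = (∑ w, Pξ u.1 w.1 * p w) + bξ u := by
    intro u
    have h := reachProb_fixed (P := Pξ) (T := T) hP0 hP1 u.1
    rw [if_neg u.2.2] at h
    simp only [hp]
    rw [h, hbξval u]
    have hsplit : ∑ t, Pξ u.1 t * reachProb Pξ T t =
        (∑ t ∈ Finset.univ.filter (fun t => t ∈ T), Pξ u.1 t * reachProb Pξ T t) +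
        ∑ t ∈ Finset.univ.filter (fun t => ¬ t ∈ T), Pξ u.1 t * reachProb Pξ T t :=
      (Finset.sum_filter_add_sum_filter_not _ _ _).symm
    rw [hsplit, add_comm]
    congr 1
    · -- non-target part
      have hsub : Finset.univ.filter (fun t => CanReach t ∧ ¬ t ∈ T) ⊆
          Finset.univ.filter (fun t => ¬ t ∈ T) := by
        intro t ht
        simp only [Finset.mem_filter, Finset.mem_univ, true_and] at ht ⊢
        exact ht.2
      rw [← Finset.sum_subset hsub]
      · exact Finset.sum_subtype (p := fun t => CanReach t ∧ t ∉ T)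
          (Finset.univ.filter fun t => CanReach t ∧ t ∉ T)
          (fun t => by simp) (fun t => Pξ u.1 t * reachProb Pξ T t)
      · intro t htmem htnot
        simp only [Finset.mem_filter, Finset.mem_univ, true_and] at htmem htnot
        have : ¬ CanReach t := fun hc => htnot ⟨hc, htmem⟩
        rw [hzero ξ hξ t this, mul_zero]
    · -- target part
      refine Finset.sum_congr rfl fun t ht => ?_
      simp only [Finset.mem_filter, Finset.mem_univ, true_and] at ht
      rw [reachProb_of_mem ht, mul_one]
  have hsys : Mξ *ᵥ p = bξ := by
    funext u
    rw [hMξ, Matrix.sub_mulVec, Matrix.one_mulVec]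
    have := hfix u
    simp only [Pi.sub_apply, hAmul p u]
    linarith
  -- invertibility
  haveI : Nonempty {u : Fin n // CanReach u ∧ u ∉ T} := ⟨sV⟩
  have hdet : Mξ.det ≠ 0 := by
    intro h0
    obtain ⟨v, hv0, hv⟩ := Matrix.exists_mulVec_eq_zero_iff.mpr h0
    have hvA : ∀ u, v u = ∑ w, Pξ u.1 w.1 * v w := by
      intro u
      have hcf := congrFun hv u
      rw [hMξ, Matrix.sub_mulVec, Matrix.one_mulVec] at hcf
      simp only [Pi.sub_apply, Pi.zero_apply, hAmul v u] at hcf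
      linarith
    obtain ⟨u₀, -, hu₀⟩ := Finset.exists_mem_eq_sup' Finset.univ_nonempty
      (fun u : {u : Fin n // CanReach u ∧ u ∉ T} => |v u|)
    have hle' : ∀ u, |v u| ≤ |v u₀| := fun u =>
      hu₀ ▸ Finset.le_sup' (fun u => |v u|) (Finset.mem_univ u)
    set m := |v u₀| with hm
    have hle : ∀ u, |v u| ≤ m := hle'
    have hmpos : 0 < m := by
      obtain ⟨w, hw⟩ := Function.ne_iff.mp hv0
      exact lt_of_lt_of_le (abs_pos.mpr hw) (hle w)
    have key : ∀ u, |v u| = m →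
        (∀ w : Fin n, ¬ (CanReach w ∧ w ∉ T) → Pξ u.1 w = 0) ∧
        (∀ w, Pξ u.1 w.1 ≠ 0 → |v w| = m) := by
      intro u hu
      have h1 : m ≤ ∑ w : {u : Fin n // CanReach u ∧ u ∉ T}, Pξ u.1 w.1 * |v w| := by
        rw [← hu]
        calc |v u| = |∑ w, Pξ u.1 w.1 * v w| := by rw [← hvA u]
          _ ≤ ∑ w, |Pξ u.1 w.1 * v w| := Finset.abs_sum_le_sum_abs _ _
          _ = ∑ w, Pξ u.1 w.1 * |v w| := by
              refine Finset.sum_congr rfl fun w _ => ?_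
              rw [abs_mul, abs_of_nonneg (hP0 _ _)]
      have hsubsum : ∑ w : {u : Fin n // CanReach u ∧ u ∉ T}, Pξ u.1 w.1 =
          ∑ w ∈ Finset.univ.filter (fun w => CanReach w ∧ w ∉ T), Pξ u.1 w :=
        by refine (Finset.sum_subtype _ (fun w => ?_) _).symm; simp
      have hr1 : ∑ w : {u : Fin n // CanReach u ∧ u ∉ T}, Pξ u.1 w.1 ≤ 1 := by
        rw [hsubsum, ← hP1 u.1]
        exact Finset.sum_le_sum_of_subset_of_nonneg (Finset.filter_subset _ _)
          (fun w _ _ => hP0 _ _)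
      have h2 : ∑ w : {u : Fin n // CanReach u ∧ u ∉ T}, Pξ u.1 w.1 * |v w| ≤ (∑ w : {u : Fin n // CanReach u ∧ u ∉ T}, Pξ u.1 w.1) * m := by
        rw [Finset.sum_mul]
        exact Finset.sum_le_sum fun w _ =>
          mul_le_mul_of_nonneg_left (hle w) (hP0 _ _)
      have hrow : ∑ w : {u : Fin n // CanReach u ∧ u ∉ T}, Pξ u.1 w.1 = 1 := by
        by_contra hne
        have hlt : (∑ w : {u : Fin n // CanReach u ∧ u ∉ T}, Pξ u.1 w.1) < 1 :=
          lt_of_le_of_ne hr1 hne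
        nlinarith
      have heq : ∑ w : {u : Fin n // CanReach u ∧ u ∉ T}, Pξ u.1 w.1 * |v w| = m := by nlinarith
      constructor
      · intro w hw
        have hcomp : ∑ w ∈ Finset.univ.filter (fun w => ¬ (CanReach w ∧ w ∉ T)), Pξ u.1 w = 0 := by
          have := Finset.sum_filter_add_sum_filter_not Finset.univ
            (fun w => CanReach w ∧ w ∉ T) (fun w => Pξ u.1 w)
          rw [← hsubsum] at this
          rw [hrow] at this
          rw [hP1 u.1] at this
          linarith
        exact (Finset.sum_eq_zero_iff_of_nonneg (fun w _ => hP0 _ _)).mp hcomp w (by simpa using hw)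
      · intro w hw
        have hzero' : ∑ w : {u : Fin n // CanReach u ∧ u ∉ T}, Pξ u.1 w.1 * (m - |v w|) = 0 := by
          have hexp : ∑ w : {u : Fin n // CanReach u ∧ u ∉ T}, Pξ u.1 w.1 * (m - |v w|) =
              (∑ w : {u : Fin n // CanReach u ∧ u ∉ T}, Pξ u.1 w.1) * m - ∑ w : {u : Fin n // CanReach u ∧ u ∉ T}, Pξ u.1 w.1 * |v w| := by
            rw [Finset.sum_mul, ← Finset.sum_sub_distrib]
            exact Finset.sum_congr rfl fun w _ => by ring
          rw [hexp, hrow, heq]; ring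
        have := (Finset.sum_eq_zero_iff_of_nonneg fun w _ =>
          mul_nonneg (hP0 _ _) (sub_nonneg.mpr (hle w))).mp hzero' w (Finset.mem_univ w)
        rcases mul_eq_zero.mp this with h | h
        · exact absurd h hw
        · linarith
    obtain ⟨t₁, ht₁T, hpath⟩ := u₀.2.1
    have contra : ∀ a (hpa : Relation.ReflTransGen step a t₁),
        ∀ ha : CanReach a ∧ a ∉ T, |v ⟨a, ha⟩| = m → False := by
      intro a hpa
      induction hpa using Relation.ReflTransGen.head_induction_on with
      | refl => intro ha _; exact ha.2 ht₁T
      | @head a c hac hcb ih =>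
        intro ha hva
        obtain ⟨hcomp, heqm⟩ := key ⟨a, ha⟩ hva
        have hPac : Pξ a c ≠ 0 := (hPne a c).mpr hac
        by_cases hc : CanReach c ∧ c ∉ T
        · exact ih hc (heqm ⟨c, hc⟩ hPac)
        · exact hPac (hcomp c hc)
    exact contra u₀.1 hpath u₀.2 hm.symm
  -- conclusion via Cramer
  have hsol : Mξ.det • p = Mξ.adjugate *ᵥ bξ := by
    rw [← hsys, Matrix.mulVec_mulVec, Matrix.adjugate_mul, Matrix.smul_mulVec,
      Matrix.one_mulVec]
  have hadj : (Mm.adjugate).map (aeval ξ) = Mξ.adjugate := by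
    have := AlgHom.map_adjugate (aeval ξ : Polynomial ℚ →ₐ[ℚ] ℝ) Mm
    simpa [AlgHom.mapMatrix_apply, hMξdef] using this
  have hfval : (aeval ξ) ((Mm.adjugate *ᵥ b) sV) = (Mξ.adjugate *ᵥ bξ) sV := by
    show (aeval ξ) (∑ w, Mm.adjugate sV w * b w) = ∑ w, Mξ.adjugate sV w * bξ w
    rw [map_sum]
    refine Finset.sum_congr rfl fun w _ => ?_
    rw [map_mul, ← hadj]
    rfl
  have hgval : (aeval ξ) Mm.det = Mξ.det := by
    have := AlgHom.map_det (aeval ξ : Polynomial ℚ →ₐ[ℚ] ℝ) Mm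
    simpa [AlgHom.mapMatrix_apply, hMξdef] using this
  refine ⟨by rw [hgval]; exact hdet, ?_⟩
  have hps : (Mξ.det • p) sV = (Mξ.adjugate *ᵥ bξ) sV := by rw [hsol]
  have hpev : Mξ.det * p sV = (aeval ξ) ((Mm.adjugate *ᵥ b) sV) := by
    rw [hfval]; exact hps
  rw [hgval]
  rw [← hpev]
  rw [mul_div_cancel_left₀ _ hdet]
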